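/- Coherence: For every defeasible deontic theory D, for every conclusion x (a literal or a rule) and every proof tag # (any of the tags ∂_C, ∂_O, ∂_P on literals or ∂^m_C, ∂^m_O, ∂^m_P on rules), it is not the case that both D ⊢_L +#x and D ⊢_L -#x, for each variant L ∈ {S, C} (Simple Conflict and Cautious Conflict Defeasible Deontic Logic with meta-rules). -/
import Mathlib


namespace DDL

/-!
Defeasible Deontic Logic with Meta-Rules (Olivieri, Governatori, Cristani, Rotolo, Sattar).
Syntax: plain literals, modalities, standard rules, rule expressions, (meta-)rules, theories.
-/


/-- Propositional atoms. -/
abbrev Atom := ℕ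

/-- Rule labels (names). -/
abbrev Label := ℕ

/-- Plain literals: atoms and negated atoms. -/
inductive PLit
  | pos : Atom → PLit
  | neg : Atom → PLit
deriving DecidableEq

/-- The complement `~l` of a plain literal. -/
def PLit.compl : PLit → PLit
  | .pos a => .neg a
  | .neg a => .pos a

/-- Modalities: constitutive (C), obligation (O), permission (P). -/
inductive Modality
  | C | O | P
deriving DecidableEq

/-- The two variants of the logic: Simple Conflict (S) and Cautious Conflict (Cau). -/
inductive Variant
  | S | Cau
deriving DecidableEq

/-- Rules are defeasible rules (⇒) or defeaters (⇝). -/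
inductive ArrowType
  | defeasible | defeater
deriving DecidableEq

/-- Antecedent elements of standard rules: plain literals `l`,
deontic literals `□l` and negated deontic literals `¬□l`. -/
inductive LitElem
  | plain : PLit → LitElem
  | mod : Modality → PLit → LitElem
  | negMod : Modality → PLit → LitElem
deriving DecidableEq

/-- A standard rule `α : A(α) ↪_□ C(α)` where the consequent is an ⊗-chain
of plain literals (a singleton unless the mode is O). -/
structure StdRule where
  label : Label
  ants : Finset LitElem
  arrow : ArrowType
  mode : Modality
  head : List PLit
deriving DecidableEq

/-- A rule expression: a standard rule `α` (pos = true) or its negation `¬α` (pos = false). -/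
structure RuleExpr where
  rule : StdRule
  pos : Bool
deriving DecidableEq

/-- The complement of a rule expression (α ↦ ¬α, ¬α ↦ α). -/
def RuleExpr.compl (e : RuleExpr) : RuleExpr := ⟨e.rule, !e.pos⟩

/-- Antecedent elements of (meta-)rules: literal elements, rule expressions `β`,
deontic rule expressions `□β` and negated deontic rule expressions `¬□β`. -/
inductive AntElem
  | lit : LitElem → AntElem
  | rex : RuleExpr → AntElem
  | modRex : Modality → RuleExpr → AntElem
  | negModRex : Modality → RuleExpr → AntElem
deriving DecidableEq

/-- Consequent (⊗-chain) elements: plain literals or rule expressions. -/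
inductive ConElem
  | lit : PLit → ConElem
  | rex : RuleExpr → ConElem
deriving DecidableEq

/-- Complement of a consequent element. -/
def ConElem.compl : ConElem → ConElem
  | .lit l => .lit l.compl
  | .rex e => .rex e.compl

/-- A (possibly meta-) rule: at most one level of nesting, since nested rules
in antecedents and consequents are standard rules. -/
structure Rule where
  label : Label
  ants : Finset AntElem
  arrow : ArrowType
  mode : Modality
  head : List ConElem
deriving DecidableEq

/-- A standard rule viewed as a rule. -/
def StdRule.toRule (r : StdRule) : Rule :=
  ⟨r.label, r.ants.image AntElem.lit, r.arrow, r.mode, r.head.map ConElem.lit⟩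

/-- A signed (possibly meta-) rule: a rule or its negation. -/
abbrev SRule := Rule × Bool

def RuleExpr.toSRule (e : RuleExpr) : SRule := (e.rule.toRule, e.pos)

/-- A defeasible deontic theory `D = (F, R, >)`: a finite set of facts
(plain literals), a finite set of rules, and a superiority relation over rules. -/
structure Theory where
  F : Finset PLit
  R : Finset Rule
  sup : Finset (Rule × Rule)

/-- The standard rule (if any) nested in an antecedent element. -/
def AntElem.nested : AntElem → Option RuleExpr
  | .lit _ => none
  | .rex e => some e
  | .modRex _ e => some e
  | .negModRex _ e => some e

/-- The rules appearing (nested) in a rule. -/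
def Rule.nestedRules (r : Rule) : Set Rule :=
  {s | (∃ a ∈ r.ants, ∃ e, a.nested = some e ∧ s = e.rule.toRule) ∨
       (∃ c ∈ r.head, ∃ e, c = ConElem.rex e ∧ s = e.rule.toRule)}

/-- The rules appearing in a theory: the rules of `R` together with the rules
nested in them. -/
def Theory.rules (D : Theory) : Set Rule :=
  {r | r ∈ D.R ∨ ∃ m ∈ D.R, r ∈ m.nestedRules}

/-- Two rules have the same content when they have the same antecedent, arrow,
mode and consequent (the labels may differ). -/
def Rule.contentEq (r s : Rule) : Prop :=
  r.ants = s.ants ∧ r.arrow = s.arrow ∧ r.mode = s.mode ∧ r.head = s.head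

/-- `y` is (a rule expression standing for) the negation of a rule with the same
content as `x`. -/
def SRule.negContentOf (y x : SRule) : Prop :=
  x.1.contentEq y.1 ∧ y.2 = !x.2

/-- The superiority relation of a theory, as a relation. -/
def Theory.supRel (D : Theory) : Rule → Rule → Prop := fun a b => (a, b) ∈ D.sup

/-- A relation is acyclic when its transitive closure has no cycle. -/
def Acyclic {β : Type*} (r : β → β → Prop) : Prop := ∀ a, ¬ Relation.TransGen r a a

/-- `C(ζ) > C(γ)`: the standard rules concluded by the two meta-rules are in the
superiority relation. -/
def headSup (D : Theory) (ζ γ : Rule) : Prop :=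
  ∃ eζ eγ : RuleExpr, ConElem.rex eζ ∈ ζ.head ∧ ConElem.rex eγ ∈ γ.head ∧
    (eζ.rule.toRule, eγ.rule.toRule) ∈ D.sup

/-- The extended superiority relation
`≻ = > ∪ {(α,β) | (α,β) ∉ > ∧ (C(α),C(β)) ∈ >}`. -/
def Theory.extSupRel (D : Theory) : Rule → Rule → Prop := fun a b =>
  (a, b) ∈ D.sup ∨ ((a, b) ∉ D.sup ∧ headSup D a b)

/-! Conflicts between rules / rule expressions (Definitions 13 and 14). -/

/-- Simple conflict (Definition 13): `β` is the negation of a rule with the same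
content as `α` (condition 1), or the consequent ⊗-chains of the two meta-rules
contain, at some indices, simply conflicting rule expressions (condition 2). -/
inductive SimplyConflicts : SRule → SRule → Prop
  | negation {r s : Rule} {b : Bool} :
      r.contentEq s → SimplyConflicts (r, b) (s, !b)
  | chain {r s : Rule} {br bs : Bool} {ν ζ : RuleExpr} :
      ConElem.rex ν ∈ r.head → ConElem.rex ζ ∈ s.head →
      SimplyConflicts ν.toSRule ζ.toSRule →
      SimplyConflicts (r, br) (s, bs)

/-- Cautious conflict (Definition 14). -/
inductive CautiouslyConflicts : SRule → SRule → Prop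
  /-- (1) `β` is the negation of a rule with the same content as `α`. -/
  | negation {r s : Rule} {b : Bool} :
      r.contentEq s → CautiouslyConflicts (r, b) (s, !b)
  /-- (2) same antecedent, arrow and mode, complementary conclusions. -/
  | oppositeHead {r s : Rule} {c : ConElem} :
      r.ants = s.ants → r.arrow = s.arrow → r.mode = s.mode →
      r.head = [c] → s.head = [c.compl] →
      CautiouslyConflicts (r, true) (s, true)
  /-- (3) an obligation rule and a permission rule with the same antecedent and
  complementary conclusions. -/
  | oblPerm {r s : Rule} {c : ConElem} :
      r.ants = s.ants → r.arrow = s.arrow →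
      r.mode = .O → s.mode = .P →
      r.head = [c] → s.head = [c.compl] →
      CautiouslyConflicts (r, true) (s, true)
  /-- (4a) obligation rules with the same antecedent whose ⊗-chains agree up to
  index `i` and have complementary elements at index `i`. -/
  | chainDiverge {r s : Rule} {i : ℕ} {ci cs : ConElem} :
      r.ants = s.ants → r.arrow = .defeasible → s.arrow = .defeasible →
      r.mode = .O → s.mode = .O →
      (∀ k < i, r.head[k]? = s.head[k]?) →
      r.head[i]? = some ci → s.head[i]? = some cs → ci = cs.compl →
      CautiouslyConflicts (r, true) (s, true)
  /-- (4b) obligation rules with the same antecedent, the ⊗-chain of the first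
  being a proper prefix of the ⊗-chain of the second. -/
  | chainPrefix {r s : Rule} :
      r.ants = s.ants → r.arrow = .defeasible → s.arrow = .defeasible →
      r.mode = .O → s.mode = .O →
      r.head.length < s.head.length →
      r.head <+: s.head →
      CautiouslyConflicts (r, true) (s, true)
  /-- (5) the consequent ⊗-chains of the two meta-rules contain, at some
  indices, cautiously conflicting rule expressions. -/
  | chain {r s : Rule} {br bs : Bool} {ν ζ : RuleExpr} :
      ConElem.rex ν ∈ r.head → ConElem.rex ζ ∈ s.head →
      CautiouslyConflicts ν.toSRule ζ.toSRule →
      CautiouslyConflicts (r, br) (s, bs)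

/-- Symmetric closure of simple conflict ("α conflicts with β and the other way
around"). -/
def sConf (x y : SRule) : Prop := SimplyConflicts x y ∨ SimplyConflicts y x

/-- Symmetric closure of cautious conflict. -/
def cConf (x y : SRule) : Prop := CautiouslyConflicts x y ∨ CautiouslyConflicts y x

/-- The conflict notion associated with each variant of the logic. -/
def Variant.conf : Variant → SRule → SRule → Prop
  | .S => sConf
  | .Cau => cConf

/-! Tagged modal formulas, applicability, proof conditions and provability. -/

/-- A conclusion: a plain literal or a (signed) rule. -/
inductive Concl
  | lit : PLit → Concl
  | rul : Rule → Bool → Concl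
deriving DecidableEq

/-- A tagged modal formula `±∂_□ l` / `±∂^m_□ α`: sign (`true` = +, `false` = −),
mode, and conclusion. -/
abbrev Tag := Bool × Modality × Concl

def ConElem.toConcl : ConElem → Concl
  | .lit l => .lit l
  | .rex e => .rul e.rule.toRule e.pos

/-- An antecedent element holds relative to the set `Pr` of already proved
tagged formulas (Definition 15, conditions 1–3 and 1'–3'). -/
def antHolds (Pr : Tag → Prop) : AntElem → Prop
  | .lit (.plain l) => Pr (true, .C, .lit l)
  | .lit (.mod m l) => Pr (true, m, .lit l)
  | .lit (.negMod m l) => Pr (false, m, .lit l)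
  | .rex e => Pr (true, .C, .rul e.rule.toRule e.pos)
  | .modRex m e => Pr (true, m, .rul e.rule.toRule e.pos)
  | .negModRex m e => Pr (false, m, .rul e.rule.toRule e.pos)

/-- An antecedent element fails, relative to `Pr` (Definition 16). -/
def antFails (Pr : Tag → Prop) : AntElem → Prop
  | .lit (.plain l) => Pr (false, .C, .lit l)
  | .lit (.mod m l) => Pr (false, m, .lit l)
  | .lit (.negMod m l) => Pr (true, m, .lit l)
  | .rex e => Pr (false, .C, .rul e.rule.toRule e.pos)
  | .modRex m e => Pr (false, m, .rul e.rule.toRule e.pos)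
  | .negModRex m e => Pr (true, m, .rul e.rule.toRule e.pos)

/-- An earlier ⊗-chain element is a violated obligation (Definition 15, cond. 4). -/
def conViolated (Pr : Tag → Prop) : ConElem → Prop
  | .lit l => Pr (true, .O, .lit l) ∧ Pr (true, .C, .lit l.compl)
  | .rex e => Pr (true, .O, .rul e.rule.toRule e.pos) ∧ Pr (false, .C, .rul e.rule.toRule e.pos)

/-- Strong negation of `conViolated` (Definition 16, cond. 4). -/
def conNotViolated (Pr : Tag → Prop) : ConElem → Prop
  | .lit l => Pr (false, .O, .lit l) ∨ Pr (false, .C, .lit l.compl)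
  | .rex e => Pr (false, .O, .rul e.rule.toRule e.pos) ∨ Pr (true, .C, .rul e.rule.toRule e.pos)

/-- Applicability of a rule (Definition 15): the rule itself is provable with
mode C and every antecedent element holds. -/
def Applicable (Pr : Tag → Prop) (α : Rule) : Prop :=
  Pr (true, .C, .rul α true) ∧ ∀ a ∈ α.ants, antHolds Pr a

/-- Applicability of an obligation rule at index `i` of its ⊗-chain. -/
def ApplicableAt (Pr : Tag → Prop) (α : Rule) (i : ℕ) : Prop :=
  Applicable Pr α ∧ ∀ j < i, ∀ c, α.head[j]? = some c → conViolated Pr c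

/-- Discardability of a rule (Definition 16): strong negation of applicability. -/
def Discarded (Pr : Tag → Prop) (α : Rule) : Prop :=
  Pr (false, .C, .rul α true) ∨ ∃ a ∈ α.ants, antFails Pr a

/-- Discardability of an obligation rule at index `i`. -/
def DiscardedAt (Pr : Tag → Prop) (α : Rule) (i : ℕ) : Prop :=
  Discarded Pr α ∨ ∃ j < i, ∃ c, α.head[j]? = some c ∧ conNotViolated Pr c

/-- `l` occurs at index `i` of the ⊗-chain of `α`. -/
def Rule.litAt (α : Rule) (l : PLit) (i : ℕ) : Prop := α.head[i]? = some (ConElem.lit l)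

/-- The signed rule `x` occurs at index `i` of the ⊗-chain of `α`. -/
def Rule.rexAt (α : Rule) (x : SRule) (i : ℕ) : Prop :=
  ∃ e : RuleExpr, α.head[i]? = some (ConElem.rex e) ∧ e.toSRule = x

def Rule.concludesLit (α : Rule) (l : PLit) : Prop := ConElem.lit l ∈ α.head

def Rule.concludesRex (α : Rule) (x : SRule) : Prop :=
  ∃ e : RuleExpr, ConElem.rex e ∈ α.head ∧ e.toSRule = x

/-! ### Proof conditions for literals (Definitions 4, 5, 6) -/

/-- `+∂_C l` (Definition 4). -/
def plusC (D : Theory) (Pr : Tag → Prop) (l : PLit) : Prop :=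
  l ∈ D.F ∨
  (l.compl ∉ D.F ∧
    (∃ β ∈ D.rules, β.mode = .C ∧ β.arrow = .defeasible ∧ β.concludesLit l ∧
        Applicable Pr β) ∧
    ∀ γ ∈ D.rules, γ.mode = .C → γ.concludesLit l.compl →
      (Discarded Pr γ ∨
        ∃ ζ ∈ D.rules, ζ.mode = .C ∧ ζ.concludesLit l ∧ Applicable Pr ζ ∧ (ζ, γ) ∈ D.sup))

/-- `−∂_C l` (Definition 4). -/
def minusC (D : Theory) (Pr : Tag → Prop) (l : PLit) : Prop :=
  l ∉ D.F ∧
  (l.compl ∈ D.F ∨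
    (∀ β ∈ D.rules, β.mode = .C → β.arrow = .defeasible → β.concludesLit l →
        Discarded Pr β) ∨
    ∃ γ ∈ D.rules, γ.mode = .C ∧ γ.concludesLit l.compl ∧ Applicable Pr γ ∧
      ∀ ζ ∈ D.rules, ζ.mode = .C → ζ.concludesLit l → (Discarded Pr ζ ∨ (ζ, γ) ∉ D.sup))

/-- `+∂_O l` (Definition 5). -/
def plusO (D : Theory) (Pr : Tag → Prop) (l : PLit) : Prop :=
  (∃ β ∈ D.rules, β.mode = .O ∧ β.arrow = .defeasible ∧
      ∃ i, β.litAt l i ∧ ApplicableAt Pr β i) ∧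
  (∀ γ ∈ D.rules,
    (γ.mode = .O → ∀ j, γ.litAt l.compl j →
      (DiscardedAt Pr γ j ∨
        ∃ ζ ∈ D.rules, ζ.mode = .O ∧ (∃ k, ζ.litAt l k ∧ ApplicableAt Pr ζ k) ∧
          (ζ, γ) ∈ D.sup)) ∧
    (γ.mode = .P → γ.concludesLit l.compl →
      (Discarded Pr γ ∨
        ∃ ζ ∈ D.rules, ζ.mode = .O ∧ (∃ k, ζ.litAt l k ∧ ApplicableAt Pr ζ k) ∧
          (ζ, γ) ∈ D.sup)))

/-- `−∂_O l` (Definition 5). -/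
def minusO (D : Theory) (Pr : Tag → Prop) (l : PLit) : Prop :=
  (∀ β ∈ D.rules, β.mode = .O → β.arrow = .defeasible → ∀ i, β.litAt l i →
      DiscardedAt Pr β i) ∨
  (∃ γ ∈ D.rules,
    ((γ.mode = .O ∧ ∃ j, γ.litAt l.compl j ∧ ApplicableAt Pr γ j) ∨
     (γ.mode = .P ∧ γ.concludesLit l.compl ∧ Applicable Pr γ)) ∧
    ∀ ζ ∈ D.rules, ζ.mode = .O → ∀ k, ζ.litAt l k →
      (DiscardedAt Pr ζ k ∨ (ζ, γ) ∉ D.sup))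

/-- `+∂_P l` (Definition 6). -/
def plusP (D : Theory) (Pr : Tag → Prop) (l : PLit) : Prop :=
  Pr (true, .O, .lit l) ∨
  ((∃ β ∈ D.rules, β.mode = .P ∧ β.arrow = .defeasible ∧ β.concludesLit l ∧
      Applicable Pr β) ∧
   ∀ γ ∈ D.rules, γ.mode = .O → ∀ j, γ.litAt l.compl j →
     (DiscardedAt Pr γ j ∨
      ∃ ζ ∈ D.rules,
        ((ζ.mode = .P ∧ ζ.concludesLit l ∧ Applicable Pr ζ) ∨
         (ζ.mode = .O ∧ ∃ k, ζ.litAt l k ∧ ApplicableAt Pr ζ k)) ∧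
        (ζ, γ) ∈ D.sup))

/-- `−∂_P l` (Definition 6). -/
def minusP (D : Theory) (Pr : Tag → Prop) (l : PLit) : Prop :=
  Pr (false, .O, .lit l) ∧
  ∀ β ∈ D.rules, β.mode = .P → β.arrow = .defeasible → β.concludesLit l →
    (Discarded Pr β ∨
     ∃ γ ∈ D.rules, γ.mode = .O ∧ (∃ j, γ.litAt l.compl j ∧ ApplicableAt Pr γ j) ∧
       ∀ ζ ∈ D.rules,
         (ζ.mode = .P → ζ.concludesLit l → (Discarded Pr ζ ∨ (ζ, γ) ∉ D.sup)) ∧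
         (ζ.mode = .O → ∀ k, ζ.litAt l k → (DiscardedAt Pr ζ k ∨ (ζ, γ) ∉ D.sup)))

/-! ### Meta-proof conditions, Simple Conflict variant (Definitions 9, 10, 12) -/

/-- A candidate defeater conclusion `z` for `x` given the attacked expression
`y`: same content and sign as `x`, labelled either as `x` or as `y`
("χ ∈ {α, φ}"). -/
def reinstates (x y z : SRule) : Prop :=
  z.2 = x.2 ∧ z.1.contentEq x.1 ∧ (z.1.label = x.1.label ∨ z.1.label = y.1.label)

/-- `+∂^m_C α`, simple variant (Definition 9). -/
def plusMCS (D : Theory) (Pr : Tag → Prop) (x : SRule) : Prop :=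
  (x.2 = true ∧ x.1 ∈ D.R) ∨
  ((∀ ω ∈ D.R, ¬ sConf (ω, true) x) ∧
   (∃ β ∈ D.rules, β.mode = .C ∧ β.arrow = .defeasible ∧ β.concludesRex x ∧
      Applicable Pr β) ∧
   ∀ γ ∈ D.rules, γ.mode = .C → ∀ y : SRule, γ.concludesRex y → y.negContentOf x →
     (Discarded Pr γ ∨
      ∃ ζ ∈ D.rules, ζ.mode = .C ∧ (∃ z, ζ.concludesRex z ∧ reinstates x y z) ∧
        Applicable Pr ζ ∧ (ζ, γ) ∈ D.sup))

/-- `−∂^m_C α`, simple variant (Definition 9). -/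
def minusMCS (D : Theory) (Pr : Tag → Prop) (x : SRule) : Prop :=
  ¬ (x.2 = true ∧ x.1 ∈ D.R) ∧
  ((∃ ρ ∈ D.R, sConf (ρ, true) x) ∨
   ∀ β ∈ D.rules, β.mode = .C → β.arrow = .defeasible → β.concludesRex x →
     (Discarded Pr β ∨
      ∃ γ ∈ D.rules, γ.mode = .C ∧ (∃ y, γ.concludesRex y ∧ y.negContentOf x ∧
        Applicable Pr γ ∧
        ∀ ζ ∈ D.rules, ζ.mode = .C → ∀ z, ζ.concludesRex z → reinstates x y z →
          (Discarded Pr ζ ∨ (ζ, γ) ∉ D.sup))))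

/-- `+∂^m_O α`, simple variant (Definition 10). -/
def plusMOS (D : Theory) (Pr : Tag → Prop) (x : SRule) : Prop :=
  (∃ β ∈ D.rules, β.mode = .O ∧ β.arrow = .defeasible ∧
      ∃ i, β.rexAt x i ∧ ApplicableAt Pr β i) ∧
  ∀ γ ∈ D.rules, ∀ y : SRule, y.negContentOf x →
    ((γ.mode = .O → ∀ j, γ.rexAt y j →
        (DiscardedAt Pr γ j ∨
         ∃ ζ ∈ D.rules, ζ.mode = .O ∧
           (∃ k z, ζ.rexAt z k ∧ reinstates x y z ∧ ApplicableAt Pr ζ k) ∧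
           (ζ, γ) ∈ D.sup)) ∧
     (γ.mode = .P → γ.concludesRex y →
        (Discarded Pr γ ∨
         ∃ ζ ∈ D.rules, ζ.mode = .O ∧
           (∃ k z, ζ.rexAt z k ∧ reinstates x y z ∧ ApplicableAt Pr ζ k) ∧
           (ζ, γ) ∈ D.sup)))

/-- `−∂^m_O α`, simple variant (Definition 10). -/
def minusMOS (D : Theory) (Pr : Tag → Prop) (x : SRule) : Prop :=
  (∀ β ∈ D.rules, β.mode = .O → β.arrow = .defeasible → ∀ i, β.rexAt x i →
      DiscardedAt Pr β i) ∨
  (∃ γ ∈ D.rules, ∃ y : SRule, y.negContentOf x ∧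
    ((γ.mode = .O ∧ ∃ j, γ.rexAt y j ∧ ApplicableAt Pr γ j) ∨
     (γ.mode = .P ∧ γ.concludesRex y ∧ Applicable Pr γ)) ∧
    ∀ ζ ∈ D.rules, ζ.mode = .O → ∀ k z, ζ.rexAt z k → reinstates x y z →
      (DiscardedAt Pr ζ k ∨ (ζ, γ) ∉ D.sup))

/-- `+∂^m_P α`, simple variant (Definition 12). -/
def plusMPS (D : Theory) (Pr : Tag → Prop) (x : SRule) : Prop :=
  Pr (true, .O, .rul x.1 x.2) ∨
  ((∃ β ∈ D.rules, β.mode = .P ∧ β.arrow = .defeasible ∧ β.concludesRex x ∧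
      Applicable Pr β) ∧
   ∀ γ ∈ D.rules, γ.mode = .O → ∀ y : SRule, y.negContentOf x → ∀ j, γ.rexAt y j →
     (DiscardedAt Pr γ j ∨
      ∃ ζ ∈ D.rules,
        ((ζ.mode = .P ∧ ∃ z, ζ.concludesRex z ∧ reinstates x y z ∧ Applicable Pr ζ) ∨
         (ζ.mode = .O ∧ ∃ k z, ζ.rexAt z k ∧ reinstates x y z ∧ ApplicableAt Pr ζ k)) ∧
        (ζ, γ) ∈ D.sup))

/-- `−∂^m_P α`, simple variant (Definition 12). -/
def minusMPS (D : Theory) (Pr : Tag → Prop) (x : SRule) : Prop :=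
  Pr (false, .O, .rul x.1 x.2) ∧
  ∀ β ∈ D.rules, β.mode = .P → β.arrow = .defeasible → β.concludesRex x →
    (Discarded Pr β ∨
     ∃ γ ∈ D.rules, γ.mode = .O ∧
       (∃ y : SRule, y.negContentOf x ∧ (∃ j, γ.rexAt y j ∧ ApplicableAt Pr γ j) ∧
        ∀ ζ ∈ D.rules,
          ((ζ.mode = .P → ∀ z, ζ.concludesRex z → reinstates x y z →
              (Discarded Pr ζ ∨ (ζ, γ) ∉ D.sup)) ∧
           (ζ.mode = .O → ∀ k z, ζ.rexAt z k → reinstates x y z →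
              (DiscardedAt Pr ζ k ∨ (ζ, γ) ∉ D.sup)))))

/-! ### Meta-proof conditions, Cautious Conflict variant (Definitions 17, 18, 19) -/

/-- The cautious-variant defeat condition on the superiority relation:
`ζ > γ`, or `γ ≯ ζ` and `C(ζ) > C(γ)`. -/
def supC (D : Theory) (ζ γ : Rule) : Prop :=
  (ζ, γ) ∈ D.sup ∨ ((γ, ζ) ∉ D.sup ∧ headSup D ζ γ)

/-- `+∂^m_C α`, cautious variant (Definition 17). -/
def plusMCC (D : Theory) (Pr : Tag → Prop) (x : SRule) : Prop :=
  (x.2 = true ∧ x.1 ∈ D.R) ∨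
  ((∀ ω ∈ D.R, ¬ cConf (ω, true) x) ∧
   ∃ β ∈ D.rules, β.mode = .C ∧ β.arrow = .defeasible ∧ β.concludesRex x ∧
     Applicable Pr β ∧
     ∀ γ ∈ D.rules, γ.mode = .C → cConf (γ, true) (β, true) →
       (Discarded Pr γ ∨
        ∃ ζ ∈ D.rules, ζ.mode = .C ∧ cConf (ζ, true) (γ, true) ∧ Applicable Pr ζ ∧
          supC D ζ γ))

/-- `−∂^m_C α`, cautious variant (Definition 17). -/
def minusMCC (D : Theory) (Pr : Tag → Prop) (x : SRule) : Prop :=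
  ¬ (x.2 = true ∧ x.1 ∈ D.R) ∧
  ((∃ ω ∈ D.R, cConf (ω, true) x) ∨
   ∀ β ∈ D.rules, β.mode = .C → β.arrow = .defeasible → β.concludesRex x →
     (Discarded Pr β ∨
      ∃ γ ∈ D.rules, γ.mode = .C ∧ cConf (γ, true) (β, true) ∧ Applicable Pr γ ∧
        ∀ ζ ∈ D.rules, ζ.mode = .C → cConf (ζ, true) (γ, true) →
          (Discarded Pr ζ ∨ ¬ supC D ζ γ)))

/-- A cautious defeater for an attacking rule `γ`, obligation case (Def. 18). -/
def defeatMOC (D : Theory) (Pr : Tag → Prop) (γ : Rule) : Prop :=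
  ∃ ζ ∈ D.rules, ζ.mode = .O ∧ cConf ((ζ : Rule), true) (γ, true) ∧
    (∃ k z, ζ.rexAt z k ∧ ApplicableAt Pr ζ k) ∧ supC D ζ γ

/-- `+∂^m_O α`, cautious variant (Definition 18). -/
def plusMOC (D : Theory) (Pr : Tag → Prop) (x : SRule) : Prop :=
  ∃ β ∈ D.rules, β.mode = .O ∧ β.arrow = .defeasible ∧
    (∃ i, β.rexAt x i ∧ ApplicableAt Pr β i) ∧
    ∀ γ ∈ D.rules, cConf ((γ : Rule), true) (β, true) →
      ((γ.mode = .O → ∀ j y, γ.rexAt y j → (DiscardedAt Pr γ j ∨ defeatMOC D Pr γ)) ∧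
       (γ.mode = .P → (Discarded Pr γ ∨ defeatMOC D Pr γ)))

/-- `−∂^m_O α`, cautious variant (Definition 18). -/
def minusMOC (D : Theory) (Pr : Tag → Prop) (x : SRule) : Prop :=
  ∀ β ∈ D.rules, β.mode = .O → β.arrow = .defeasible → ∀ i, β.rexAt x i →
    (DiscardedAt Pr β i ∨
     ∃ γ ∈ D.rules, cConf ((γ : Rule), true) (β, true) ∧
       ((γ.mode = .O ∧ ∃ j y, γ.rexAt y j ∧ ApplicableAt Pr γ j) ∨
        (γ.mode = .P ∧ Applicable Pr γ)) ∧
       ∀ ζ ∈ D.rules, ζ.mode = .O → cConf ((ζ : Rule), true) (γ, true) →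
         ((∀ k z, ζ.rexAt z k → DiscardedAt Pr ζ k) ∨ ¬ supC D ζ γ))

/-- A cautious defeater for an attacking rule `γ`, permission case (Def. 19). -/
def defeatMPC (D : Theory) (Pr : Tag → Prop) (γ : Rule) : Prop :=
  ∃ ζ ∈ D.rules, cConf ((ζ : Rule), true) (γ, true) ∧
    ((ζ.mode = .O ∧ ∃ k z, ζ.rexAt z k ∧ ApplicableAt Pr ζ k) ∨
     (ζ.mode = .P ∧ Applicable Pr ζ)) ∧ supC D ζ γ

/-- `+∂^m_P α`, cautious variant (Definition 19). -/
def plusMPC (D : Theory) (Pr : Tag → Prop) (x : SRule) : Prop :=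
  ∃ β ∈ D.rules, β.mode = .P ∧ β.arrow = .defeasible ∧ β.concludesRex x ∧
    Applicable Pr β ∧
    ∀ γ ∈ D.rules, cConf ((γ : Rule), true) (β, true) →
      ((γ.mode = .O → ∀ j y, γ.rexAt y j → (DiscardedAt Pr γ j ∨ defeatMPC D Pr γ)) ∧
       (γ.mode = .P → (Discarded Pr γ ∨ defeatMPC D Pr γ)))

/-- `−∂^m_P α`, cautious variant (Definition 19). -/
def minusMPC (D : Theory) (Pr : Tag → Prop) (x : SRule) : Prop :=
  ∀ β ∈ D.rules, β.mode = .P → β.arrow = .defeasible → β.concludesRex x →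
    (Discarded Pr β ∨
     ∃ γ ∈ D.rules, cConf ((γ : Rule), true) (β, true) ∧
       ((γ.mode = .O ∧ ∃ j y, γ.rexAt y j ∧ ApplicableAt Pr γ j) ∨
        (γ.mode = .P ∧ Applicable Pr γ)) ∧
       ∀ ζ ∈ D.rules, cConf ((ζ : Rule), true) (γ, true) →
         (((ζ.mode = .O → ∀ k z, ζ.rexAt z k → DiscardedAt Pr ζ k) ∧
           (ζ.mode = .P → Discarded Pr ζ)) ∨ ¬ supC D ζ γ))

/-! ### Provability -/

/-- The one-step proof conditions of the logic: `Cond D V Pr t` holds when the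
tagged modal formula `t` may be appended to a proof whose previous steps are
(included in) `Pr`, according to variant `V`. -/
def Cond (D : Theory) (V : Variant) (Pr : Tag → Prop) : Tag → Prop
  | (true, .C, .lit l) => plusC D Pr l
  | (false, .C, .lit l) => minusC D Pr l
  | (true, .O, .lit l) => plusO D Pr l
  | (false, .O, .lit l) => minusO D Pr l
  | (true, .P, .lit l) => plusP D Pr l
  | (false, .P, .lit l) => minusP D Pr l
  | (true, .C, .rul r b) =>
      match V with | .S => plusMCS D Pr (r, b) | .Cau => plusMCC D Pr (r, b)
  | (false, .C, .rul r b) =>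
      match V with | .S => minusMCS D Pr (r, b) | .Cau => minusMCC D Pr (r, b)
  | (true, .O, .rul r b) =>
      match V with | .S => plusMOS D Pr (r, b) | .Cau => plusMOC D Pr (r, b)
  | (false, .O, .rul r b) =>
      match V with | .S => minusMOS D Pr (r, b) | .Cau => minusMOC D Pr (r, b)
  | (true, .P, .rul r b) =>
      match V with | .S => plusMPS D Pr (r, b) | .Cau => plusMPC D Pr (r, b)
  | (false, .P, .rul r b) =>
      match V with | .S => minusMPS D Pr (r, b) | .Cau => minusMPC D Pr (r, b)

/-- The tagged formulas provable by proofs of length at most `n`. -/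
def ProvesAt (D : Theory) (V : Variant) : ℕ → Tag → Prop
  | 0, _ => False
  | n + 1, t => ProvesAt D V n t ∨ Cond D V (ProvesAt D V n) t

/-- `D ⊢_V t`: there is a proof of the tagged modal formula `t` from `D`
according to the proof conditions of variant `V`. -/
def Proves (D : Theory) (V : Variant) (t : Tag) : Prop := ∃ n, ProvesAt D V n t

/-! ### Auxiliary lemmas for coherence -/

/-- Two stages of a proof are incompatible: no tagged formula is proved
positively at one and negatively at the other. -/
def Incomp (P Q : Tag → Prop) : Prop :=
  ∀ m x, ¬(P (true, m, x) ∧ Q (false, m, x)) ∧ ¬(P (false, m, x) ∧ Q (true, m, x))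

lemma Incomp.symm {P Q : Tag → Prop} (h : Incomp P Q) : Incomp Q P := fun m x =>
  ⟨fun ⟨a, b⟩ => (h m x).2 ⟨b, a⟩, fun ⟨a, b⟩ => (h m x).1 ⟨b, a⟩⟩

section Aux

variable {P Q : Tag → Prop} {D : Theory}

lemma holds_fails (h : Incomp P Q) {a : AntElem}
    (h1 : antHolds P a) (h2 : antFails Q a) : False := by
  cases a with
  | lit le =>
    cases le with
    | plain l => exact (h .C (.lit l)).1 ⟨h1, h2⟩
    | mod m l => exact (h m (.lit l)).1 ⟨h1, h2⟩
    | negMod m l => exact (h m (.lit l)).2 ⟨h1, h2⟩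
  | rex e => exact (h .C _).1 ⟨h1, h2⟩
  | modRex m e => exact (h m _).1 ⟨h1, h2⟩
  | negModRex m e => exact (h m _).2 ⟨h1, h2⟩

lemma app_disc (h : Incomp P Q) {α : Rule}
    (h1 : Applicable P α) (h2 : Discarded Q α) : False := by
  rcases h2 with h2 | ⟨a, ha, hf⟩
  · exact (h .C _).1 ⟨h1.1, h2⟩
  · exact holds_fails h (h1.2 a ha) hf

lemma viol (h : Incomp P Q) {c : ConElem}
    (h1 : conViolated P c) (h2 : conNotViolated Q c) : False := by
  cases c with
  | lit l =>
    rcases h2 with h2 | h2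
    · exact (h .O _).1 ⟨h1.1, h2⟩
    · exact (h .C _).1 ⟨h1.2, h2⟩
  | rex e =>
    rcases h2 with h2 | h2
    · exact (h .O _).1 ⟨h1.1, h2⟩
    · exact (h .C _).2 ⟨h1.2, h2⟩

lemma appAt_discAt (h : Incomp P Q) {α : Rule} {i : ℕ}
    (h1 : ApplicableAt P α i) (h2 : DiscardedAt Q α i) : False := by
  rcases h2 with h2 | ⟨j, hj, c, hc, hnv⟩
  · exact app_disc h h1.1 h2
  · exact viol h (h1.2 j hj c hc) hnv

lemma litC_incomp (h : Incomp P Q) {l : PLit}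
    (hp : plusC D P l) (hm : minusC D Q l) : False := by
  rcases hp with hp | ⟨hnc, ⟨β, hβ, hβC, hβd, hβcl, happ⟩, hAll⟩
  · exact hm.1 hp
  rcases hm.2 with h2 | h2 | ⟨γ, hγ, hγC, hγcl, happγ, hζall⟩
  · exact hnc h2
  · exact app_disc h happ (h2 β hβ hβC hβd hβcl)
  rcases hAll γ hγ hγC hγcl with hd | ⟨ζ, hζ, hζC, hζcl, happζ, hsup⟩
  · exact app_disc h.symm happγ hd
  rcases hζall ζ hζ hζC hζcl with hd | hns
  · exact app_disc h happζ hd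
  · exact hns hsup

lemma litO_incomp (h : Incomp P Q) {l : PLit}
    (hp : plusO D P l) (hm : minusO D Q l) : False := by
  obtain ⟨⟨β, hβ, hβO, hβd, i, hlit, happ⟩, hAll⟩ := hp
  rcases hm with hm | ⟨γ, hγ, hcase, hζall⟩
  · exact appAt_discAt h happ (hm β hβ hβO hβd i hlit)
  rcases hcase with ⟨hγO, j, hjl, happγ⟩ | ⟨hγP, hγcl, happγ⟩
  · rcases (hAll γ hγ).1 hγO j hjl with hd | ⟨ζ, hζ, hζO, ⟨k, hk, happζ⟩, hsup⟩
    · exact appAt_discAt h.symm happγ hd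
    rcases hζall ζ hζ hζO k hk with hd | hns
    · exact appAt_discAt h happζ hd
    · exact hns hsup
  · rcases (hAll γ hγ).2 hγP hγcl with hd | ⟨ζ, hζ, hζO, ⟨k, hk, happζ⟩, hsup⟩
    · exact app_disc h.symm happγ hd
    rcases hζall ζ hζ hζO k hk with hd | hns
    · exact appAt_discAt h happζ hd
    · exact hns hsup

lemma litP_incomp (h : Incomp P Q) {l : PLit}
    (hp : plusP D P l) (hm : minusP D Q l) : False := by
  rcases hp with hp | ⟨⟨β, hβ, hβP, hβd, hβcl, happ⟩, hAll⟩
  · exact (h .O _).1 ⟨hp, hm.1⟩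
  rcases hm.2 β hβ hβP hβd hβcl with hd | ⟨γ, hγ, hγO, ⟨j, hjl, happγ⟩, hζall⟩
  · exact app_disc h happ hd
  rcases hAll γ hγ hγO j hjl with hd | ⟨ζ, hζ, hcase, hsup⟩
  · exact appAt_discAt h.symm happγ hd
  rcases hcase with ⟨hζP, hζcl, happζ⟩ | ⟨hζO, k, hk, happζ⟩
  · rcases (hζall ζ hζ).1 hζP hζcl with hd | hns
    · exact app_disc h happζ hd
    · exact hns hsup
  · rcases (hζall ζ hζ).2 hζO k hk with hd | hns
    · exact appAt_discAt h happζ hd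
    · exact hns hsup

lemma metaCS_incomp (h : Incomp P Q) {x : SRule}
    (hp : plusMCS D P x) (hm : minusMCS D Q x) : False := by
  rcases hp with hp | ⟨hno, ⟨β, hβ, hβC, hβd, hβcl, happ⟩, hAll⟩
  · exact hm.1 hp
  rcases hm.2 with ⟨ρ, hρ, hconf⟩ | h2
  · exact hno ρ hρ hconf
  rcases h2 β hβ hβC hβd hβcl with hd | ⟨γ, hγ, hγC, y, hycl, hyneg, happγ, hζall⟩
  · exact app_disc h happ hd
  rcases hAll γ hγ hγC y hycl hyneg with hd | ⟨ζ, hζ, hζC, ⟨z, hzcl, hre⟩, happζ, hsup⟩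
  · exact app_disc h.symm happγ hd
  rcases hζall ζ hζ hζC z hzcl hre with hd | hns
  · exact app_disc h happζ hd
  · exact hns hsup

lemma metaOS_incomp (h : Incomp P Q) {x : SRule}
    (hp : plusMOS D P x) (hm : minusMOS D Q x) : False := by
  obtain ⟨⟨β, hβ, hβO, hβd, i, hrx, happ⟩, hAll⟩ := hp
  rcases hm with hm | ⟨γ, hγ, y, hyneg, hcase, hζall⟩
  · exact appAt_discAt h happ (hm β hβ hβO hβd i hrx)
  rcases hcase with ⟨hγO, j, hj, happγ⟩ | ⟨hγP, hγcl, happγ⟩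
  · rcases (hAll γ hγ y hyneg).1 hγO j hj with hd | ⟨ζ, hζ, hζO, ⟨k, z, hk, hre, happζ⟩, hsup⟩
    · exact appAt_discAt h.symm happγ hd
    rcases hζall ζ hζ hζO k z hk hre with hd | hns
    · exact appAt_discAt h happζ hd
    · exact hns hsup
  · rcases (hAll γ hγ y hyneg).2 hγP hγcl with hd | ⟨ζ, hζ, hζO, ⟨k, z, hk, hre, happζ⟩, hsup⟩
    · exact app_disc h.symm happγ hd
    rcases hζall ζ hζ hζO k z hk hre with hd | hns
    · exact appAt_discAt h happζ hd
    · exact hns hsup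

lemma metaPS_incomp (h : Incomp P Q) {x : SRule}
    (hp : plusMPS D P x) (hm : minusMPS D Q x) : False := by
  rcases hp with hp | ⟨⟨β, hβ, hβP, hβd, hβcl, happ⟩, hAll⟩
  · exact (h .O _).1 ⟨hp, hm.1⟩
  rcases hm.2 β hβ hβP hβd hβcl with hd | ⟨γ, hγ, hγO, y, hyneg, ⟨j, hj, happγ⟩, hζall⟩
  · exact app_disc h happ hd
  rcases hAll γ hγ hγO y hyneg j hj with hd | ⟨ζ, hζ, hcase, hsup⟩
  · exact appAt_discAt h.symm happγ hd
  rcases hcase with ⟨hζP, z, hzcl, hre, happζ⟩ | ⟨hζO, k, z, hk, hre, happζ⟩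
  · rcases (hζall ζ hζ).1 hζP z hzcl hre with hd | hns
    · exact app_disc h happζ hd
    · exact hns hsup
  · rcases (hζall ζ hζ).2 hζO k z hk hre with hd | hns
    · exact appAt_discAt h happζ hd
    · exact hns hsup

lemma metaCC_incomp (h : Incomp P Q) {x : SRule}
    (hp : plusMCC D P x) (hm : minusMCC D Q x) : False := by
  rcases hp with hp | ⟨hno, β, hβ, hβC, hβd, hβcl, happ, hAll⟩
  · exact hm.1 hp
  rcases hm.2 with ⟨ω, hω, hconf⟩ | h2
  · exact hno ω hω hconf
  rcases h2 β hβ hβC hβd hβcl with hd | ⟨γ, hγ, hγC, hconf, happγ, hζall⟩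
  · exact app_disc h happ hd
  rcases hAll γ hγ hγC hconf with hd | ⟨ζ, hζ, hζC, hconfζ, happζ, hsup⟩
  · exact app_disc h.symm happγ hd
  rcases hζall ζ hζ hζC hconfζ with hd | hns
  · exact app_disc h happζ hd
  · exact hns hsup

lemma metaOC_incomp (h : Incomp P Q) {x : SRule}
    (hp : plusMOC D P x) (hm : minusMOC D Q x) : False := by
  obtain ⟨β, hβ, hβO, hβd, ⟨i, hrx, happ⟩, hAll⟩ := hp
  rcases hm β hβ hβO hβd i hrx with hd | ⟨γ, hγ, hconf, hcase, hζall⟩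
  · exact appAt_discAt h happ hd
  have defeat : defeatMOC D P γ → False := by
    rintro ⟨ζ, hζ, hζO, hconfζ, ⟨k, z, hk, happζ⟩, hsup⟩
    rcases hζall ζ hζ hζO hconfζ with hd | hns
    · exact appAt_discAt h happζ (hd k z hk)
    · exact hns hsup
  rcases hcase with ⟨hγO, j, y, hj, happγ⟩ | ⟨hγP, happγ⟩
  · rcases (hAll γ hγ hconf).1 hγO j y hj with hd | hdf
    · exact appAt_discAt h.symm happγ hd
    · exact defeat hdf
  · rcases (hAll γ hγ hconf).2 hγP with hd | hdf
    · exact app_disc h.symm happγ hd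
    · exact defeat hdf

lemma metaPC_incomp (h : Incomp P Q) {x : SRule}
    (hp : plusMPC D P x) (hm : minusMPC D Q x) : False := by
  obtain ⟨β, hβ, hβP, hβd, hβcl, happ, hAll⟩ := hp
  rcases hm β hβ hβP hβd hβcl with hd | ⟨γ, hγ, hconf, hcase, hζall⟩
  · exact app_disc h happ hd
  have defeat : defeatMPC D P γ → False := by
    rintro ⟨ζ, hζ, hconfζ, hdisj, hsup⟩
    rcases hζall ζ hζ hconfζ with hd | hns
    · rcases hdisj with ⟨hζO, k, z, hk, happζ⟩ | ⟨hζP, happζ⟩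
      · exact appAt_discAt h happζ (hd.1 hζO k z hk)
      · exact app_disc h happζ (hd.2 hζP)
    · exact hns hsup
  rcases hcase with ⟨hγO, j, y, hj, happγ⟩ | ⟨hγP, happγ⟩
  · rcases (hAll γ hγ hconf).1 hγO j y hj with hd | hdf
    · exact appAt_discAt h.symm happγ hd
    · exact defeat hdf
  · rcases (hAll γ hγ hconf).2 hγP with hd | hdf
    · exact app_disc h.symm happγ hd
    · exact defeat hdf

lemma cond_incomp (h : Incomp P Q) {V : Variant} {m : Modality} {x : Concl}
    (hp : Cond D V P (true, m, x)) (hm : Cond D V Q (false, m, x)) : False := by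
  cases x with
  | lit l =>
    cases m with
    | C => exact litC_incomp h hp hm
    | O => exact litO_incomp h hp hm
    | P => exact litP_incomp h hp hm
  | rul r b =>
    cases V with
    | S =>
      cases m with
      | C => exact metaCS_incomp h hp hm
      | O => exact metaOS_incomp h hp hm
      | P => exact metaPS_incomp h hp hm
    | Cau =>
      cases m with
      | C => exact metaCC_incomp h hp hm
      | O => exact metaOC_incomp h hp hm
      | P => exact metaPC_incomp h hp hm

end Aux

lemma provesAt_incomp (D : Theory) (V : Variant) :
    ∀ s n k, n + k = s → ∀ (m : Modality) (x : Concl),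
      ¬(ProvesAt D V n (true, m, x) ∧ ProvesAt D V k (false, m, x)) := by
  intro s
  induction s using Nat.strong_induction_on with
  | _ s ih =>
    rintro n k rfl m x ⟨h1, h2⟩
    match n, k, h1, h2 with
    | 0, _, h1, _ => exact h1
    | _ + 1, 0, _, h2 => exact h2
    | n + 1, k + 1, h1, h2 =>
      rcases h1 with h1 | h1
      · exact ih (n + (k + 1)) (by omega) n (k + 1) rfl m x ⟨h1, h2⟩
      rcases h2 with h2 | h2
      · exact ih ((n + 1) + k) (by omega) (n + 1) k rfl m x ⟨Or.inr h1, h2⟩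
      have hinc : Incomp (ProvesAt D V n) (ProvesAt D V k) := fun m' x' =>
        ⟨fun ⟨a, b⟩ => ih (n + k) (by omega) n k rfl m' x' ⟨a, b⟩,
         fun ⟨a, b⟩ => ih (k + n) (by omega) k n rfl m' x' ⟨b, a⟩⟩
      exact cond_incomp hinc h1 h2

/-- **Coherence** (Theorem 1). For every defeasible deontic theory `D`, every
conclusion `x` (a literal or a rule), every proof tag (any of `∂_C, ∂_O, ∂_P`
on literals or `∂^m_C, ∂^m_O, ∂^m_P` on rules) and each variant
`L ∈ {S, C}` of Defeasible Deontic Logic with meta-rules, it is not the case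
that both `D ⊢_L +#x` and `D ⊢_L −#x`. -/
theorem coherence (D : Theory) (L : Variant) (m : Modality) (x : Concl) :
    ¬ (Proves D L (true, m, x) ∧ Proves D L (false, m, x)) := by
  rintro ⟨⟨n, h1⟩, ⟨k, h2⟩⟩
  exact provesAt_incomp D L (n + k) n k rfl m x ⟨h1, h2⟩

end DDL
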